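/- For the Dyck shift D_N (N ≥ 2) with bracket alphabet {α₁,…,α_N, β₁,…,β_N}, every word of the form β_{μ₁}⋯β_{μ_l} (consisting only of closing-bracket symbols) is an l-synchronizing word of D_N. -/

import Mathlib

/-- The alphabet of the Dyck shift `D_N`: `Sum.inl i` is the opening bracket `α_i = (_i`
and `Sum.inr j` is the closing bracket `β_j = )_j`. -/
abbrev DyckSym (N : ℕ) := Fin N ⊕ Fin N

/-- One step of reduction in the Dyck inverse monoid.  The state `some (bs, as)` records
the nonzero reduced form `β_{bs} α_{as}` (with `as` the stack of pending `α`s, most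
recent first); `none` is the zero element.  The relations are `α_i β_j = 1` if `i = j`
and `α_i β_j = 0` otherwise. -/
def dyckStep {N : ℕ} :
    Option (List (Fin N) × List (Fin N)) → DyckSym N →
      Option (List (Fin N) × List (Fin N))
  | none, _ => none
  | some (bs, as), Sum.inl i => some (bs, i :: as)
  | some (bs, as), Sum.inr j =>
    match as with
    | [] => some (j :: bs, [])
    | i :: as' => if i = j then some (bs, as') else none

/-- A word is admissible for the Dyck shift `D_N` iff its product in the Dyck inverse
monoid is nonzero. -/
def dyckAdm {N : ℕ} (w : List (DyckSym N)) : Prop :=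
  w.foldl dyckStep (some ([], [])) ≠ none

/-- The language `B_*(D_N)` of the Dyck shift. -/
def dyckLang (N : ℕ) : Set (List (DyckSym N)) := {w | dyckAdm w}

/-- `Γ_l^-` of a word with respect to a language `L`. -/
def GammaL {B : Type*} (L : Set (List B)) (l : ℕ) (μ : List B) : Set (List B) :=
  {ν | ν.length = l ∧ ν ∈ L ∧ ν ++ μ ∈ L}

/-- `μ` is an `l`-synchronizing word with respect to the language `L`. -/
def LSyncL {B : Type*} (L : Set (List B)) (l : ℕ) (μ : List B) : Prop :=
  μ ∈ L ∧ ∀ ω : List B, μ ++ ω ∈ L → GammaL L l μ = GammaL L l (μ ++ ω)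

lemma dyck_foldl_none {N : ℕ} (w : List (DyckSym N)) :
    w.foldl dyckStep none = none := by
  induction w with
  | nil => rfl
  | cons a w ih => simpa [dyckStep] using ih

lemma dyck_step_map {N : ℕ} (bs : List (Fin N))
    (s : Option (List (Fin N) × List (Fin N))) (a : DyckSym N) :
    dyckStep (Option.map (fun p => (p.1 ++ bs, p.2)) s) a =
      Option.map (fun p => (p.1 ++ bs, p.2)) (dyckStep s a) := by
  rcases s with _ | ⟨c, as⟩
  · rfl
  · rcases a with i | j
    · rfl
    · rcases as with _ | ⟨i, as'⟩
      · rfl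
      · by_cases h : i = j <;> simp [dyckStep, h]

lemma dyck_fold_map {N : ℕ} (w : List (DyckSym N)) (bs : List (Fin N))
    (s : Option (List (Fin N) × List (Fin N))) :
    w.foldl dyckStep (Option.map (fun p => (p.1 ++ bs, p.2)) s) =
      Option.map (fun p => (p.1 ++ bs, p.2)) (w.foldl dyckStep s) := by
  induction w generalizing s with
  | nil => rfl
  | cons a w ih => simp only [List.foldl_cons, dyck_step_map, ih]

lemma dyck_fold_betas {N : ℕ} (μ : List (Fin N)) (bs : List (Fin N)) :
    (μ.map Sum.inr).foldl dyckStep (some (bs, [])) = some (μ.reverse ++ bs, []) := by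
  induction μ generalizing bs with
  | nil => rfl
  | cons j μ ih => simp [dyckStep, ih]

lemma dyck_as_len {N : ℕ} (w : List (DyckSym N)) :
    ∀ bs as : List (Fin N),
      w.foldl dyckStep (some (bs, as)) = none ∨
      ∃ bs' as', w.foldl dyckStep (some (bs, as)) = some (bs', as') ∧
        as'.length ≤ as.length + w.length := by
  induction w with
  | nil => exact fun bs as => Or.inr ⟨bs, as, rfl, by simp⟩
  | cons a w ih =>
    intro bs as
    rcases a with i | j
    · rcases ih bs (i :: as) with h | ⟨bs', as', h, hle⟩
      · left; simpa [dyckStep] using h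
      · right; exact ⟨bs', as', by simpa [dyckStep] using h, by
          simp only [List.length_cons] at hle ⊢; omega⟩
    · rcases as with _ | ⟨i, as0⟩
      · rcases ih (j :: bs) [] with h | ⟨bs', as', h, hle⟩
        · left; simpa [dyckStep] using h
        · right; exact ⟨bs', as', by simpa [dyckStep] using h, by
            simp only [List.length_nil, List.length_cons] at hle ⊢; omega⟩
      · by_cases hij : i = j
        · rcases ih bs as0 with h | ⟨bs', as', h, hle⟩
          · left; simpa [dyckStep, hij] using h
          · right; exact ⟨bs', as', by simpa [dyckStep, hij] using h, by
              simp only [List.length_cons] at hle ⊢; omega⟩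
        · left; simpa [dyckStep, hij] using dyck_foldl_none w

lemma dyck_empty_after {N : ℕ} (μ : List (Fin N)) :
    ∀ bs as : List (Fin N), as.length ≤ μ.length →
      (μ.map Sum.inr).foldl dyckStep (some (bs, as)) = none ∨
      ∃ bs', (μ.map Sum.inr).foldl dyckStep (some (bs, as)) = some (bs', []) := by
  induction μ with
  | nil =>
    intro bs as h
    have : as = [] := List.length_eq_zero_iff.mp (Nat.le_zero.mp h)
    subst this
    exact Or.inr ⟨bs, rfl⟩
  | cons j μ ih =>
    intro bs as h
    rcases as with _ | ⟨i, as0⟩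
    · exact Or.inr ⟨μ.reverse ++ j :: bs, by simpa [dyckStep] using dyck_fold_betas μ (j :: bs)⟩
    · by_cases hij : i = j
      · rcases ih bs as0 (by simpa using Nat.le_of_succ_le_succ h) with h' | ⟨bs', h'⟩
        · left; simpa [dyckStep, hij] using h'
        · right; exact ⟨bs', by simpa [dyckStep, hij] using h'⟩
      · left; simpa [dyckStep, hij] using dyck_foldl_none (μ.map Sum.inr)

/-- in the Dyck shift `D_N` (`N ≥ 2`), every word
`β_{μ₁} ⋯ β_{μ_l}` consisting only of closing brackets is `l`-synchronizing. -/
theorem dyck_beta_word_lSync (N : ℕ) (hN : 2 ≤ N) (μ : List (Fin N)) :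
    LSyncL (dyckLang N) μ.length (μ.map Sum.inr) := by
  set β := μ.map Sum.inr with hβ
  constructor
  · show dyckAdm β
    unfold dyckAdm
    rw [hβ, dyck_fold_betas]
    simp
  · intro ω hω
    ext ν
    simp only [GammaL, Set.mem_setOf_eq]
    refine and_congr_right fun hlen => and_congr_right fun hadm => ?_
    have hω' : ω.foldl dyckStep (some ([], [])) ≠ none := by
      have : (β ++ ω).foldl dyckStep (some ([], [])) ≠ none := hω
      rw [List.foldl_append, hβ, dyck_fold_betas] at this
      simp only [List.append_nil] at this
      intro hc
      apply this
      have := dyck_fold_map ω μ.reverse (some ([], []))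
      simp only [List.nil_append, hc, Option.map_none] at this
      exact this
    constructor
    · intro hpre
      have hpre' : (ν ++ β).foldl dyckStep (some ([], [])) ≠ none := hpre
      rw [List.foldl_append] at hpre'
      have hν : ν.foldl dyckStep (some ([], [])) ≠ none := by
        intro hc; rw [hc] at hpre'; exact hpre' (dyck_foldl_none β)
      rcases dyck_as_len ν [] [] with h | ⟨bs0, as0, h0, hle⟩
      · exact absurd h hν
      rw [h0] at hpre'
      rcases dyck_empty_after μ bs0 as0 (by simpa [hlen] using hle) with h | ⟨bs', h'⟩
      · rw [← hβ] at h; exact absurd h hpre'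
      show (ν ++ (β ++ ω)).foldl dyckStep (some ([], [])) ≠ none
      rw [← List.append_assoc, List.foldl_append, List.foldl_append, h0]
      rw [← hβ] at h'
      rw [h']
      have := dyck_fold_map ω bs' (some ([], []))
      simp only [Option.map_some, List.nil_append] at this
      rw [this]
      intro hc
      rcases hx : ω.foldl dyckStep (some (([] : List (Fin N)), ([] : List (Fin N)))) with _ | p
      · exact hω' hx
      · rw [hx] at hc; simp at hc
    · intro hfull
      show (ν ++ β).foldl dyckStep (some ([], [])) ≠ none
      intro hc
      have : (ν ++ (β ++ ω)).foldl dyckStep (some ([], [])) ≠ none := hfull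
      rw [← List.append_assoc, List.foldl_append, hc] at this
      exact this (dyck_foldl_none ω)
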